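/- Let G be the extended m×n grid directed graph, and let (I|J) be a pressed interval cortege with i = max I, j = max J, k = min(i,j). Then there is exactly one (I|J)-flow in G (a family of pairwise vertex-disjoint directed paths from sources {r_p : p ∈ I} to sinks {c_q : q ∈ J}), and it consists of paths P_1,...,P_k where P_ℓ goes from r_{i−k+ℓ} east along row i−k+ℓ to column j−k+ℓ and then south to c_{j−k+ℓ}, making its single turn at vertex (i−k+ℓ, j−k+ℓ). -/

import Mathlib

/-- Directed edges of the extended `m×n` grid: horizontal edges
`(i,j-1) → (i,j)` and vertical edges `(i,j) → (i-1,j)` for `i ∈ [m]`,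
`j ∈ [n]`. -/
def GridEdge (m n : ℕ) (u v : ℕ × ℕ) : Prop :=
  (u.1 = v.1 ∧ 1 ≤ u.1 ∧ u.1 ≤ m ∧ v.2 = u.2 + 1 ∧ 1 ≤ v.2 ∧ v.2 ≤ n) ∨
  (u.2 = v.2 ∧ u.1 = v.1 + 1 ∧ 1 ≤ u.1 ∧ u.1 ≤ m ∧ 1 ≤ u.2 ∧ u.2 ≤ n)

/-- `φ` is an `(I|J)`-flow: for each `p ∈ I` the list `φ p` is a directed
path of the grid from the source `r_p = (p,0)` to some sink `c_q = (0,q)`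
with `q ∈ J`, every sink of `J` is reached, and the paths are pairwise
vertex-disjoint. -/
def IsFlow (m n : ℕ) (I J : Finset ℕ) (φ : ℕ → List (ℕ × ℕ)) : Prop :=
  (∀ p ∈ I, (φ p).Chain' (GridEdge m n) ∧ (φ p).head? = some (p, 0) ∧
    ∃ q ∈ J, (φ p).getLast? = some (0, q)) ∧
  (∀ q ∈ J, ∃ p ∈ I, (φ p).getLast? = some (0, q)) ∧
  (∀ p ∈ I, ∀ p' ∈ I, p ≠ p' → ∀ v, v ∈ φ p → v ∉ φ p')

/-- The hook path from the source `(p,0)`: east along row `p` to column `c`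
(its single turn at `(p,c)`), then south to the sink `(0,c)`. -/
def hookPath (p c : ℕ) : List (ℕ × ℕ) :=
  ((List.range (c + 1)).map fun t => (p, t)) ++
    ((List.range p).reverse.map fun t => (t, c))

lemma mem_hookPath {v : ℕ × ℕ} {p c : ℕ} :
    v ∈ hookPath p c ↔ (v.1 = p ∧ v.2 ≤ c) ∨ (v.2 = c ∧ v.1 < p) := by
  obtain ⟨a, b⟩ := v
  simp only [hookPath, List.mem_append, List.mem_map, List.mem_reverse, List.mem_range,
    Prod.ext_iff]
  constructor
  · rintro (⟨t, ht, h1, h2⟩ | ⟨t, ht, h1, h2⟩) <;> simp_all <;> omega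
  · rintro (⟨rfl, hb⟩ | ⟨rfl, ha⟩)
    · exact Or.inl ⟨b, by omega, rfl, rfl⟩
    · exact Or.inr ⟨a, by omega, rfl, rfl⟩

lemma hookPath_head (p c : ℕ) : (hookPath p c).head? = some (p, 0) := by
  simp [hookPath, List.range_succ_eq_map]

lemma hookPath_last {p : ℕ} (c : ℕ) (hp : 1 ≤ p) :
    (hookPath p c).getLast? = some (0, c) := by
  have h2 : ((List.range p).reverse.map fun t => (t, c)) ≠ [] := by
    simp; omega
  rw [hookPath, List.getLast?_append_of_ne_nil _ h2]
  rw [List.map_reverse, List.getLast?_reverse]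
  obtain ⟨p, rfl⟩ : ∃ q, p = q + 1 := ⟨p - 1, by omega⟩
  simp [List.range_succ_eq_map]

lemma last_range (k : ℕ) : (List.range (k+1)).getLast? = some k := by
  rw [List.range_succ, List.getLast?_append_of_ne_nil] <;> simp

lemma hookPath_chain {m n p c : ℕ} (h1 : 1 ≤ p) (h2 : p ≤ m) (h3 : 1 ≤ c) (h4 : c ≤ n) :
    (hookPath p c).Chain' (GridEdge m n) := by
  simp only [List.Chain']; rw [hookPath, List.isChain_append]
  refine ⟨?_, ?_, ?_⟩
  · rw [List.isChain_map, List.isChain_range_succ]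
    intro t ht
    exact Or.inl ⟨rfl, h1, h2, rfl, by omega, by omega⟩
  · rw [List.isChain_map, List.isChain_reverse]
    cases p with
    | zero => simp
    | succ q =>
      rw [List.isChain_range_succ]
      intro t ht
      exact Or.inr ⟨rfl, rfl, by omega, by omega, h3, h4⟩
  · intro x hx y hy
    have hx' : ((List.range (c+1)).map fun t => (p, t)).getLast? = some (p, c) := by
      rw [List.getLast?_map, last_range]; rfl
    have hy' : ((List.range p).reverse.map fun t => (t, c)).head? = some (p - 1, c) := by
      obtain ⟨q, rfl⟩ : ∃ q, p = q + 1 := ⟨p - 1, by omega⟩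
      rw [List.head?_map, List.head?_reverse, last_range]; rfl
    rw [hx'] at hx; rw [hy'] at hy
    cases hx; cases hy
    exact Or.inr ⟨rfl, by simp; omega, by omega, by omega, h3, h4⟩

lemma chain_head_bounds {m n : ℕ} :
    ∀ {L : List (ℕ × ℕ)} {u : ℕ × ℕ}, L.Chain' (GridEdge m n) → L.head? = some u →
      ∀ v ∈ L, v.1 ≤ u.1 ∧ u.2 ≤ v.2 := by
  intro L
  induction L with
  | nil => intro u _ h; simp at h
  | cons a L ih =>
    intro u hc hh v hv
    simp only [List.head?_cons, Option.some.injEq] at hh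
    subst hh
    rw [List.mem_cons] at hv
    rcases hv with rfl | hv
    · omega
    cases L with
    | nil => simp at hv
    | cons b T =>
      simp only [List.Chain'] at hc; rw [List.isChain_cons_cons] at hc
      have hb := ih hc.2 rfl v hv
      rcases hc.1 with ⟨h1, _, _, h4, _⟩ | ⟨h1, h2, _⟩ <;> omega

lemma chain_last_bounds {m n : ℕ} :
    ∀ {L : List (ℕ × ℕ)} {w : ℕ × ℕ}, L.Chain' (GridEdge m n) → L.getLast? = some w →
      ∀ v ∈ L, w.1 ≤ v.1 ∧ v.2 ≤ w.2 := by
  intro L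
  induction L with
  | nil => intro u _ h; simp at h
  | cons a L ih =>
    intro w hc hl v hv
    rw [List.mem_cons] at hv
    cases L with
    | nil =>
      simp at hl hv
      subst hl; subst hv; omega
    | cons b T =>
      rw [List.getLast?_cons_cons] at hl
      simp only [List.Chain'] at hc; rw [List.isChain_cons_cons] at hc
      rcases hv with rfl | hv
      · have hb := ih hc.2 hl b (List.mem_cons_self (a := b) (l := T))
        rcases hc.1 with ⟨h1, _, _, h4, _⟩ | ⟨h1, h2, _⟩ <;> omega
      · exact ih hc.2 hl v hv

lemma chain_row_visit {m n : ℕ} :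
    ∀ {L : List (ℕ × ℕ)} {u w : ℕ × ℕ}, L.Chain' (GridEdge m n) → L.head? = some u →
      L.getLast? = some w → ∀ x, w.1 ≤ x → x ≤ u.1 → ∃ y, (x, y) ∈ L := by
  intro L
  induction L with
  | nil => intro u w _ h; simp at h
  | cons a L ih =>
    intro u w hc hh hl x hwx hxu
    simp only [List.head?_cons, Option.some.injEq] at hh
    subst hh
    cases L with
    | nil =>
      simp at hl; subst hl
      have : x = a.1 := by omega
      exact ⟨a.2, by rw [this]; simp⟩
    | cons b T =>
      rw [List.getLast?_cons_cons] at hl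
      simp only [List.Chain'] at hc; rw [List.isChain_cons_cons] at hc
      by_cases hx : x ≤ b.1
      · obtain ⟨y, hy⟩ := ih hc.2 rfl hl x (by
          have := chain_last_bounds hc.2 hl b (List.mem_cons_self (a := b) (l := T)); omega) hx
        exact ⟨y, List.mem_cons_of_mem _ hy⟩
      · have : x = a.1 := by
          rcases hc.1 with ⟨h1, _⟩ | ⟨_, h2, _⟩ <;> omega
        exact ⟨a.2, by rw [this]; simp⟩

lemma chain_row_prefix {m n : ℕ} :
    ∀ {L : List (ℕ × ℕ)} {a b y : ℕ}, L.Chain' (GridEdge m n) → L.head? = some (a, b) →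
      (a, y) ∈ L → ∀ t, b ≤ t → t ≤ y → (a, t) ∈ L := by
  intro L
  induction L with
  | nil => intro a b y _ h; simp at h
  | cons u L ih =>
    intro a b y hc hh hy t hbt hty
    simp only [List.head?_cons, Option.some.injEq] at hh
    subst hh
    rw [List.mem_cons] at hy
    cases L with
    | nil =>
      simp only [List.not_mem_nil, or_false] at hy
      have : t = b ∧ y = b := by
        have := congrArg Prod.snd hy; simp at this; omega
      simp [this.1]
    | cons v T =>
      simp only [List.Chain'] at hc; rw [List.isChain_cons_cons] at hc
      rcases hc.1 with ⟨h1, _, _, h4, _⟩ | ⟨h1, h2, _⟩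
      · -- horizontal : v = (a, b+1)
        have hv : v = (a, b + 1) := by
          obtain ⟨v1, v2⟩ := v; simp at h1 h4; simp [h1, h4]
        rcases hy with hy | hy
        · have : t = b := by
            have := congrArg Prod.snd hy; simp at this; omega
          subst this; simp
        · rcases Nat.eq_or_lt_of_le hbt with h | h
          · subst h; simp
          · have := ih (a := a) (b := b + 1) (y := y) hc.2 (by simp [hv]) hy t (by omega) hty
            exact List.mem_cons_of_mem _ this
      · -- vertical: all of L has row ≤ a - 1 < a
        rcases hy with hy | hy
        · have : t = b ∧ y = b := by
            have := congrArg Prod.snd hy; simp at this; omega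
          simp [this.1]
        · exfalso
          have hb := chain_head_bounds hc.2 rfl (a, y) hy
          have hv := chain_head_bounds hc.2 rfl v (List.mem_cons_self (a := v) (l := T))
          simp at hb
          omega

lemma chain_drop {m n : ℕ} :
    ∀ {L : List (ℕ × ℕ)} {a b x z : ℕ}, L.Chain' (GridEdge m n) → L.head? = some (a, b) →
      (x, z) ∈ L → x < a → ∃ d, (a, d) ∈ L ∧ (a - 1, d) ∈ L ∧ d ≤ z := by
  intro L
  induction L with
  | nil => intro a b x z _ h; simp at h
  | cons u L ih =>
    intro a b x z hc hh hxz hxa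
    simp only [List.head?_cons, Option.some.injEq] at hh
    subst hh
    rw [List.mem_cons] at hxz
    have hne : (x, z) ≠ (a, b) := by
      intro h; have := congrArg Prod.fst h; simp at this; omega
    cases L with
    | nil => simp only [List.not_mem_nil, or_false] at hxz; exact absurd hxz hne
    | cons v T =>
      simp only [List.Chain'] at hc; rw [List.isChain_cons_cons] at hc
      have hxz' : (x, z) ∈ v :: T := by tauto
      rcases hc.1 with ⟨h1, _, _, h4, _⟩ | ⟨h1, h2, _⟩
      · -- horizontal
        have hv : v = (a, b + 1) := by
          obtain ⟨v1, v2⟩ := v; simp at h1 h4; simp [h1, h4]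
        obtain ⟨d, hd1, hd2, hd3⟩ :=
          ih (a := a) (b := b + 1) (x := x) (z := z) hc.2 (by simp [hv]) hxz' hxa
        exact ⟨d, List.mem_cons_of_mem _ hd1, List.mem_cons_of_mem _ hd2, hd3⟩
      · -- vertical: v = (a-1, b)
        have hv : v = (a - 1, b) := by
          obtain ⟨v1, v2⟩ := v; simp at h1 h2; simp [Prod.ext_iff]; omega
        refine ⟨b, by simp, List.mem_cons_of_mem _ (by rw [← hv]; simp), ?_⟩
        have := chain_head_bounds hc.2 rfl (x, z) hxz'
        rw [hv] at this
        exact this.2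

lemma chain_row0_last {m n : ℕ} :
    ∀ {L : List (ℕ × ℕ)} {d : ℕ} {w : ℕ × ℕ}, L.Chain' (GridEdge m n) → (0, d) ∈ L →
      L.getLast? = some w → w = (0, d) := by
  intro L
  induction L with
  | nil => intro d w _ h; simp at h
  | cons u L ih =>
    intro d w hc hm hl
    rw [List.mem_cons] at hm
    cases L with
    | nil =>
      simp only [List.not_mem_nil, or_false] at hm
      simp at hl; rw [← hl, ← hm]
    | cons v T =>
      rw [List.getLast?_cons_cons] at hl
      simp only [List.Chain'] at hc; rw [List.isChain_cons_cons] at hc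
      rcases hm with hm | hm
      · exfalso
        rw [← hm] at hc
        rcases hc.1 with ⟨_, h, _⟩ | ⟨_, h, _⟩ <;> simp at h
      · exact ih hc.2 hm hl

def hookTail (p c x y : ℕ) : List (ℕ × ℕ) :=
  ((List.range' y (c - y)).map fun t => (p, t)) ++
    ((List.range (x + 1)).reverse.map fun t => (t, c))

lemma det {m n p c : ℕ} (hp : 1 ≤ p) :
    ∀ (L : List (ℕ × ℕ)) (x y : ℕ), L.Chain' (GridEdge m n) →
      (∀ v ∈ L, (v.1 = p ∧ v.2 ≤ c) ∨ (v.2 = c ∧ v.1 ≤ p)) →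
      L.head? = some (x, y) → L.getLast? = some (0, c) → L = hookTail p c x y := by
  intro L
  induction L with
  | nil => intro x y _ _ h; simp at h
  | cons u L ih =>
    intro x y hc hset hh hl
    simp only [List.head?_cons, Option.some.injEq] at hh
    subst hh
    cases L with
    | nil =>
      simp only [List.getLast?_singleton, Option.some.injEq] at hl
      have hx : x = 0 := by have := congrArg Prod.fst hl; simpa using this
      have hy : y = c := by have := congrArg Prod.snd hl; simpa using this
      rw [hx, hy, hookTail]
      simp [List.range_succ]
    | cons v T =>
      obtain ⟨v1, v2⟩ := v
      rw [List.getLast?_cons_cons] at hl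
      simp only [List.Chain'] at hc; rw [List.isChain_cons_cons] at hc
      have hu := hset (x, y) List.mem_cons_self
      have hv := hset (v1, v2) (List.mem_cons_of_mem _ List.mem_cons_self)
      simp only [] at hu hv
      have hset' : ∀ w ∈ (v1, v2) :: T, (w.1 = p ∧ w.2 ≤ c) ∨ (w.2 = c ∧ w.1 ≤ p) :=
        fun w hw => hset w (List.mem_cons_of_mem _ hw)
      have hedge := hc.1
      have hIH := ih v1 v2 hc.2 hset' rfl hl
      by_cases hyc : y = c
      · -- vertical move
        have hx1 : 1 ≤ x := by
          by_contra h
          have hx0 : x = 0 := by omega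
          rcases hedge with ⟨_, h2, _⟩ | ⟨_, h2, _⟩ <;> rw [hx0] at h2 <;> simp at h2
        have hv1 : v1 = x - 1 ∧ v2 = y := by
          rcases hedge with ⟨h1, _, _, h4, _⟩ | ⟨h1, h2, _⟩
          · exfalso; simp at h4; rcases hv with ⟨_, h⟩ | ⟨h, _⟩ <;> omega
          · simp at h1 h2; omega
        have hv2c : v2 = c := by rw [hv1.2, hyc]
        rw [hIH, hookTail, hookTail, hv1.1, hv2c, hyc]
        simp only [Nat.sub_self, List.range'_zero, List.map_nil, List.nil_append]
        obtain ⟨x', hx'⟩ : ∃ q, x = q + 1 := ⟨x - 1, by omega⟩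
        rw [hx', show x' + 1 - 1 = x' by omega, List.range_succ (n := x' + 1)]
        simp
      · -- horizontal move
        have hxp : x = p := by
          rcases hu with ⟨h, _⟩ | ⟨h, _⟩ <;> simp_all
        have hyc' : y < c := by
          rcases hu with ⟨_, h⟩ | ⟨h, _⟩ <;> omega
        have hv1 : v1 = x ∧ v2 = y + 1 := by
          rcases hedge with ⟨h1, _, _, h4, _⟩ | ⟨h1, h2, _⟩
          · simp at h1 h4; omega
          · exfalso
            simp at h1 h2
            rcases hv with ⟨h, _⟩ | ⟨h, _⟩ <;> omega
        rw [hIH, hv1.1, hv1.2, hxp, hookTail, hookTail]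
        obtain ⟨e, he⟩ : ∃ e, c - y = e + 1 := ⟨c - y - 1, by omega⟩
        rw [he, List.range'_succ, show c - (y + 1) = e by omega]
        simp

lemma hookTail_eq_hookPath (p c : ℕ) : hookTail p c p 0 = hookPath p c := by
  rw [hookTail, hookPath, Nat.sub_zero, ← List.range_eq_range', List.range_succ,
    List.range_succ]
  simp

lemma uniq1 {m n s i j : ℕ} (hs1 : 1 ≤ s) (hi1 : 1 ≤ i) (him : i ≤ m)
    (hsum : s + i = j + 1) (hjn : j ≤ n)
    (φ : ℕ → List (ℕ × ℕ)) (hφ : IsFlow m n (Finset.Icc 1 i) (Finset.Icc s j) φ) :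
    ∀ p, 1 ≤ p → p ≤ i → φ p = hookPath p (s + p - 1) := by
  obtain ⟨hpaths, hsurj, hdisj⟩ := hφ
  intro p
  induction p using Nat.strong_induction_on with
  | _ p IH =>
  intro hp1 hpi
  have hpmem : p ∈ Finset.Icc 1 i := Finset.mem_Icc.mpr ⟨hp1, hpi⟩
  obtain ⟨hchain, hhead, q, hqJ, hlast⟩ := hpaths p hpmem
  have hqJ' := Finset.mem_Icc.mp hqJ
  -- avoidance of earlier hooks
  have havoid : ∀ x, 1 ≤ x → x < p → ∀ v, v ∈ φ p →
      ¬((v.1 = x ∧ v.2 ≤ s + x - 1) ∨ (v.2 = s + x - 1 ∧ v.1 < x)) := by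
    intro x hx1 hxp v hv hcontra
    have hx : φ x = hookPath x (s + x - 1) := IH x hxp hx1 (by omega)
    exact hdisj p hpmem x (Finset.mem_Icc.mpr ⟨hx1, by omega⟩) (by omega) v hv
      (by rw [hx]; exact mem_hookPath.mpr hcontra)
  -- any drop column out of row p is ≥ s + p - 1
  have hdlow : ∀ d, (p - 1, d) ∈ φ p → s + p - 1 ≤ d := by
    intro d hd
    by_cases hp1' : p = 1
    · have := chain_row0_last hchain (by rw [show p - 1 = 0 by omega] at hd; exact hd) hlast
      have : q = d := by have := congrArg Prod.snd this; simpa using this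
      omega
    · have := havoid (p - 1) (by omega) (by omega) (p - 1, d) hd
      simp only [not_or, not_and] at this
      have h1 := this.1
      simp at h1
      omega
  -- the drop of path p
  obtain ⟨z, hz⟩ := chain_row_visit hchain hhead hlast 0 (by simp) (by simp)
  obtain ⟨d, hd1, hd2, _⟩ := chain_drop hchain hhead hz (by omega)
  have hdge : s + p - 1 ≤ d := hdlow d hd2
  -- the sink of path p is s + p - 1
  have hspJ : s + p - 1 ∈ Finset.Icc s j := Finset.mem_Icc.mpr ⟨by omega, by omega⟩
  obtain ⟨p'', hp''mem, hlast''⟩ := hsurj (s + p - 1) hspJ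
  have hp'' := Finset.mem_Icc.mp hp''mem
  have hp''p : p'' = p := by
    rcases lt_trichotomy p'' p with h | h | h
    · exfalso
      have hx : φ p'' = hookPath p'' (s + p'' - 1) := IH p'' h hp''.1 hp''.2
      rw [hx, hookPath_last _ hp''.1] at hlast''
      have := congrArg Prod.snd (Option.some.injEq _ _ ▸ hlast'' : _)
      simp at hlast''
      omega
    · exact h
    · exfalso
      obtain ⟨hchain'', hhead'', _⟩ := hpaths p'' hp''mem
      obtain ⟨y, hy⟩ := chain_row_visit hchain'' hhead'' hlast'' p (by simp) (by simp; omega)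
      have hyle : y ≤ s + p - 1 :=
        (chain_last_bounds hchain'' hlast'' (p, y) hy).2
      have hyp : (p, y) ∈ φ p :=
        chain_row_prefix hchain hhead hd1 y (by omega) (by omega)
      exact hdisj p hpmem p'' hp''mem (by omega) (p, y) hyp hy
  rw [hp''p] at hlast''
  -- every vertex of φ p is on the hook
  have hset : ∀ v ∈ φ p, (v.1 = p ∧ v.2 ≤ s + p - 1) ∨ (v.2 = s + p - 1 ∧ v.1 ≤ p) := by
    intro v hv
    have hb1 := chain_head_bounds hchain hhead v hv
    have hb2 := chain_last_bounds hchain hlast'' v hv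
    simp only [] at hb1 hb2
    rcases eq_or_lt_of_le hb1.1 with h | h
    · exact Or.inl ⟨h, by omega⟩
    · obtain ⟨d', hd1', hd2', hd3'⟩ := chain_drop hchain hhead (show (v.1, v.2) ∈ φ p by simpa using hv) h
      have := hdlow d' hd2'
      exact Or.inr ⟨by omega, by omega⟩
  have := det (m := m) (n := n) hp1 (φ p) p 0 hchain hset hhead hlast''
  rw [this, hookTail_eq_hookPath]

lemma exist_flow {m n r s i j : ℕ} (hr1 : 1 ≤ r) (hri : r ≤ i) (him : i ≤ m)
    (hs1 : 1 ≤ s) (hsj : s ≤ j) (hjn : j ≤ n) (hsum : r + j = s + i) :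
    IsFlow m n (Finset.Icc r i) (Finset.Icc s j) (fun p => hookPath p (p + j - i)) := by
  refine ⟨?_, ?_, ?_⟩
  · intro p hp
    have hp' := Finset.mem_Icc.mp hp
    have hc1 : s ≤ p + j - i := by omega
    have hc2 : p + j - i ≤ j := by omega
    refine ⟨hookPath_chain (by omega) (by omega) (by omega) (by omega), hookPath_head _ _, ?_⟩
    exact ⟨p + j - i, Finset.mem_Icc.mpr ⟨hc1, hc2⟩, hookPath_last _ (by omega)⟩
  · intro q hq
    have hq' := Finset.mem_Icc.mp hq
    refine ⟨q + i - j, Finset.mem_Icc.mpr ⟨by omega, by omega⟩, ?_⟩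
    have h1 : q + i - j + j - i = q := by omega
    show (hookPath (q + i - j) (q + i - j + j - i)).getLast? = some (0, q)
    rw [h1, hookPath_last _ (by omega)]
  · intro p hp p' hp' hne v hv hv'
    have h1 := Finset.mem_Icc.mp hp
    have h2 := Finset.mem_Icc.mp hp'
    rw [mem_hookPath] at hv hv'
    omega

lemma gridEdge_transpose {m n : ℕ} {u v : ℕ × ℕ} (h : GridEdge m n u v) :
    GridEdge n m v.swap u.swap := by
  obtain ⟨a, b⟩ := u
  obtain ⟨x, y⟩ := v
  rcases h with ⟨h1, h2, h3, h4, h5, h6⟩ | ⟨h1, h2, h3, h4, h5, h6⟩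
  · exact Or.inr (by simp_all)
  · exact Or.inl (by simp_all)

lemma chain_transpose {m n : ℕ} {L : List (ℕ × ℕ)} (h : L.Chain' (GridEdge m n)) :
    ((L.map Prod.swap).reverse).Chain' (GridEdge n m) := by
  simp only [List.Chain'] at h ⊢; rw [List.isChain_reverse, List.isChain_map]
  exact h.imp fun a b hab => gridEdge_transpose hab

lemma hook_transpose (p c : ℕ) :
    ((hookPath p c).map Prod.swap).reverse = hookPath c p := by
  rw [hookPath, hookPath]
  simp only [List.map_append, List.map_map, List.reverse_append, List.map_reverse,
    List.reverse_reverse]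
  rw [List.range_succ (n := c), List.range_succ (n := p)]
  simp [Function.comp_def]

lemma swap_mem_iff {v : ℕ × ℕ} {L : List (ℕ × ℕ)} :
    v ∈ (L.map Prod.swap).reverse ↔ v.swap ∈ L := by
  rw [List.mem_reverse, List.mem_map]
  constructor
  · rintro ⟨u, hu, rfl⟩; simpa using hu
  · intro h; exact ⟨v.swap, h, by simp⟩

lemma uniq2 {m n r i j : ℕ} (hr1 : 1 ≤ r) (hrm : i ≤ m) (hj1 : 1 ≤ j) (hjn : j ≤ n)
    (hsum : r + j = i + 1)
    (φ : ℕ → List (ℕ × ℕ)) (hφ : IsFlow m n (Finset.Icc r i) (Finset.Icc 1 j) φ) :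
    ∀ p, r ≤ p → p ≤ i → φ p = hookPath p (p + 1 - r) := by
  classical
  obtain ⟨hpaths, hsurj, hdisj⟩ := hφ
  -- choose, for each sink q, the path reaching it
  have hchoice : ∀ q ∈ Finset.Icc 1 j, ∃ p, p ∈ Finset.Icc r i ∧ (φ p).getLast? = some (0, q) := by
    intro q hq; obtain ⟨p, hp, hl⟩ := hsurj q hq; exact ⟨p, hp, hl⟩
  set ψ : ℕ → List (ℕ × ℕ) := fun q =>
    if h : ∃ p, p ∈ Finset.Icc r i ∧ (φ p).getLast? = some (0, q) then
      ((φ h.choose).map Prod.swap).reverse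
    else [] with hψdef
  -- paths with the same sink coincide
  have hsame : ∀ p ∈ Finset.Icc r i, ∀ p' ∈ Finset.Icc r i, ∀ q : ℕ,
      (φ p).getLast? = some (0, q) → (φ p').getLast? = some (0, q) → p = p' := by
    intro p hp p' hp' q h1 h2
    by_contra hne
    exact hdisj p hp p' hp' hne (0, q) (List.mem_of_mem_getLast? (by rw [h1]; rfl))
      (List.mem_of_mem_getLast? (by rw [h2]; rfl))
  have hψflow : IsFlow n m (Finset.Icc 1 j) (Finset.Icc r i) ψ := by
    refine ⟨?_, ?_, ?_⟩
    · intro q hq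
      have h := hchoice q hq
      rw [hψdef]
      simp only [dif_pos h]
      obtain ⟨hpm, hpl⟩ := h.choose_spec
      obtain ⟨hchain, hhead, _⟩ := hpaths _ hpm
      refine ⟨chain_transpose hchain, ?_, ?_⟩
      · rw [List.head?_reverse, List.getLast?_map, hpl]; rfl
      · refine ⟨h.choose, hpm, ?_⟩
        rw [List.getLast?_reverse, List.head?_map, hhead]; rfl
    · intro p hp
      obtain ⟨_, _, q, hqm, hql⟩ := hpaths p hp
      refine ⟨q, hqm, ?_⟩
      have h : ∃ p', p' ∈ Finset.Icc r i ∧ (φ p').getLast? = some (0, q) := ⟨p, hp, hql⟩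
      rw [hψdef]
      simp only [dif_pos h]
      obtain ⟨hpm', hpl'⟩ := h.choose_spec
      have : h.choose = p := hsame _ hpm' _ hp q hpl' hql
      rw [this]
      obtain ⟨_, hhead, _⟩ := hpaths p hp
      rw [List.getLast?_reverse, List.head?_map, hhead]; rfl
    · intro q hq q' hq' hne v hv hv'
      have h := hchoice q hq
      have h' := hchoice q' hq'
      rw [hψdef] at hv hv'
      simp only [dif_pos h, dif_pos h'] at hv hv'
      obtain ⟨hpm, hpl⟩ := h.choose_spec
      obtain ⟨hpm', hpl'⟩ := h'.choose_spec
      have hpp : h.choose ≠ h'.choose := by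
        intro he
        rw [he, hpl'] at hpl
        simp at hpl
        exact hne (by omega)
      rw [swap_mem_iff] at hv hv'
      exact hdisj _ hpm _ hpm' hpp v.swap hv hv'
  have huniq := uniq1 (m := n) (n := m) (s := r) (i := j) (j := i)
    hr1 hj1 hjn (by omega) hrm ψ hψflow
  intro p hrp hpi
  have hpm : p ∈ Finset.Icc r i := Finset.mem_Icc.mpr ⟨hrp, hpi⟩
  obtain ⟨_, hhead, q, hqm, hql⟩ := hpaths p hpm
  have hqm' := Finset.mem_Icc.mp hqm
  have hψq := huniq q hqm'.1 hqm'.2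
  have h : ∃ p', p' ∈ Finset.Icc r i ∧ (φ p').getLast? = some (0, q) := ⟨p, hpm, hql⟩
  rw [hψdef] at hψq
  simp only [dif_pos h] at hψq
  obtain ⟨hpm', hpl'⟩ := h.choose_spec
  have hce : h.choose = p := hsame _ hpm' _ hpm q hpl' hql
  rw [hce] at hψq
  -- undo the transposition
  have hφp : φ p = ((hookPath q (r + q - 1)).map Prod.swap).reverse := by
    have := congrArg (fun L => (List.map Prod.swap L).reverse) hψq
    simpa using this
  rw [hook_transpose] at hφp
  -- identify the indices
  have hhead' : (hookPath (r + q - 1) q).head? = some (r + q - 1, 0) := hookPath_head _ _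
  rw [← hφp, hhead] at hhead'
  have : p = r + q - 1 := by
    have := congrArg Prod.fst (Option.some.injEq _ _ ▸ hhead' : (p, 0) = (r + q - 1, 0))
    simpa using this
  rw [hφp, show p + 1 - r = q by omega, this]


/-- for a pressed interval cortege `(I|J)` with `I = [r..i]`,
`J = [s..j]`, `|I| = |J|`, `r = 1` or `s = 1`, there is exactly one
`(I|J)`-flow in the extended `m×n` grid, namely the one where the path
starting at source `p ∈ I` goes east to column `p + j − i` and then south,
i.e. (writing `k = min(i,j)`, `p = i−k+ℓ`) the path `P_ℓ` makes its single
turn at the diagonal vertex `(i−k+ℓ, j−k+ℓ)`. -/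
theorem stmt11 (m n r s i j : ℕ)
    (hr1 : 1 ≤ r) (hri : r ≤ i) (him : i ≤ m)
    (hs1 : 1 ≤ s) (hsj : s ≤ j) (hjn : j ≤ n)
    (hcard : (Finset.Icc r i).card = (Finset.Icc s j).card)
    (hpressed : r = 1 ∨ s = 1) :
    IsFlow m n (Finset.Icc r i) (Finset.Icc s j)
        (fun p => hookPath p (p + j - i)) ∧
      ∀ φ, IsFlow m n (Finset.Icc r i) (Finset.Icc s j) φ →
        ∀ p ∈ Finset.Icc r i, φ p = hookPath p (p + j - i) := by
  rw [Nat.card_Icc, Nat.card_Icc] at hcard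
  have hsum : r + j = s + i := by omega
  refine ⟨exist_flow hr1 hri him hs1 hsj hjn hsum, ?_⟩
  intro φ hφ p hp
  have hp' := Finset.mem_Icc.mp hp
  rcases hpressed with hr | hs
  · subst hr
    have := uniq1 (m := m) (n := n) (s := s) (i := i) (j := j)
      hs1 hri him (by omega) hjn φ hφ p hp'.1 hp'.2
    rw [this, show s + p - 1 = p + j - i by omega]
  · subst hs
    have := uniq2 (m := m) (n := n) (r := r) (i := i) (j := j)
      hr1 him hsj hjn (by omega) φ hφ p hp'.1 hp'.2
    rw [this, show p + 1 - r = p + j - i by omega]
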